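/- Let α > 0, γ > 0, τ ∈ [0,1], and let X, Y be nonnegative random variables with joint survival function P(X>x, Y>y) = e^(−αx − γ·e^(ατx)·y) for x,y > 0. Then X is exponential with rate α, Y is exponential with rate γ, Cov(X,Y) = −τ/(α·γ·(1+τ)), Var(X) = 1/α², Var(Y) = 1/γ², and the Pearson correlation satisfies ρ(X,Y) = −τ/(1+τ), so ρ(X,Y) ∈ [−1/2, 0]. -/

import Mathlib

open MeasureTheory ProbabilityTheory Set Filter

lemma afc_aux_exp (r : ℝ) (hr : 0 < r) : ∫ x in Ioi (0:ℝ), Real.exp (-(r*x)) = 1/r := by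
  have h := Real.integral_rpow_mul_exp_neg_mul_Ioi one_pos hr
  simpa [Real.Gamma_one] using h

lemma afc_aux_texp (r : ℝ) (hr : 0 < r) : ∫ x in Ioi (0:ℝ), x * Real.exp (-(r*x)) = 1/r^2 := by
  have h := Real.integral_rpow_mul_exp_neg_mul_Ioi two_pos hr
  rw [show (2:ℝ)-1 = 1 by norm_num] at h
  simp only [Real.rpow_one, Real.Gamma_two, mul_one] at h
  rw [h, show ((2:ℝ)) = ((2:ℕ):ℝ) by norm_num, Real.rpow_natCast]
  field_simp

lemma afc_aux_sqrtexp (r : ℝ) (hr : 0 < r) :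
    ∫ t in Ioi (0:ℝ), Real.exp (-(r * Real.sqrt t)) = 2/r^2 := by
  have h := integral_comp_rpow_Ioi_of_pos (g := fun y => Real.exp (-(r * Real.sqrt y))) two_pos
  rw [← h]
  have : ∀ x ∈ Ioi (0:ℝ), ((2:ℝ) * x ^ ((2:ℝ) - 1)) • Real.exp (-(r * Real.sqrt (x ^ (2:ℝ))))
      = 2 * (x * Real.exp (-(r * x))) := by
    intro x hx
    have hx0 : (0:ℝ) < x := hx
    rw [show ((2:ℝ)-1) = 1 by norm_num, Real.rpow_one,
      show x ^ (2:ℝ) = x ^ (2:ℕ) by rw [← Real.rpow_natCast]; norm_num,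
      Real.sqrt_sq hx0.le, smul_eq_mul]
    ring
  rw [setIntegral_congr_fun measurableSet_Ioi this, integral_const_mul, afc_aux_texp r hr]
  ring

lemma afc_aux_intOn (r : ℝ) (hr : 0 < r) :
    IntegrableOn (fun x => Real.exp (-(r*x))) (Ioi (0:ℝ)) := by
  simpa [neg_mul] using exp_neg_integrableOn_Ioi 0 hr

lemma afc_survival_limit {Ω : Type*} [MeasurableSpace Ω] (μ : Measure Ω) [IsFiniteMeasure μ]
    (A : ℕ → Set Ω) (hmono : Monotone A) (c : ℕ → ℝ) (L : ℝ)
    (hc : ∀ n, (μ (A n)).toReal = c n) (hL : Tendsto c atTop (nhds L)) :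
    μ (⋃ n, A n) = ENNReal.ofReal L := by
  have h1 := tendsto_measure_iUnion_atTop (μ := μ) hmono
  have h2 : (μ ∘ A) = fun n => ENNReal.ofReal (c n) := funext fun n => by
    rw [Function.comp_apply, ← hc n, ENNReal.ofReal_toReal (measure_ne_top μ _)]
  rw [h2] at h1
  exact tendsto_nhds_unique h1 ((ENNReal.continuous_ofReal.tendsto L).comp hL)

lemma afc_u_anti : Antitone (fun n : ℕ => 1/((n:ℝ)+1)) := by
  intro m n h
  apply one_div_le_one_div_of_le (by positivity)
  have : (m:ℝ) ≤ n := Nat.cast_le.2 h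
  linarith

lemma afc_u_pos (n : ℕ) : (0:ℝ) < 1/((n:ℝ)+1) := by positivity

lemma afc_marginals
    {Ω : Type*} [MeasurableSpace Ω] (μ : Measure Ω) [IsProbabilityMeasure μ]
    (X Y : Ω → ℝ) (hX : Measurable X) (hY : Measurable Y)
    (α γ τ : ℝ)
    (hjoint : ∀ x > (0:ℝ), ∀ y > (0:ℝ),
      (μ {ω | x < X ω ∧ y < Y ω}).toReal
        = Real.exp (-(α * x) - γ * Real.exp (α * τ * x) * y)) :
    (∀ x > (0:ℝ), μ {ω | x < X ω} = ENNReal.ofReal (Real.exp (-(α * x)))) ∧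
    (∀ y > (0:ℝ), μ {ω | y < Y ω} = ENNReal.ofReal (Real.exp (-(γ * y)))) := by
  set u : ℕ → ℝ := fun n => 1/((n:ℝ)+1) with hu_def
  have hu_lim : Tendsto u atTop (nhds 0) := tendsto_one_div_add_atTop_nhds_zero_nat
  have hS : μ {ω | 0 < X ω ∧ 0 < Y ω} = 1 := by
    have hun : (⋃ n, {ω | u n < X ω ∧ u n < Y ω}) = {ω | 0 < X ω ∧ 0 < Y ω} := by
      ext ω
      simp only [mem_iUnion, mem_setOf_eq]
      constructor
      · rintro ⟨n, h1, h2⟩; exact ⟨(afc_u_pos n).trans h1, (afc_u_pos n).trans h2⟩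
      · rintro ⟨h1, h2⟩
        obtain ⟨n, hn⟩ := exists_nat_one_div_lt (lt_min_iff.mpr ⟨h1, h2⟩)
        exact ⟨n, (lt_min_iff.mp hn).1, (lt_min_iff.mp hn).2⟩
    have := afc_survival_limit μ (fun n => {ω | u n < X ω ∧ u n < Y ω})
      (fun m n h ω => fun ⟨h1, h2⟩ =>
        ⟨lt_of_le_of_lt (afc_u_anti h) h1, lt_of_le_of_lt (afc_u_anti h) h2⟩)
      (fun n => Real.exp (-(α * u n) - γ * Real.exp (α * τ * u n) * u n)) 1
      (fun n => hjoint (u n) (afc_u_pos n) (u n) (afc_u_pos n))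
      (by
        have h1 : Tendsto (fun n => -(α * u n) - γ * Real.exp (α * τ * u n) * u n) atTop
            (nhds (-(α * 0) - γ * Real.exp (α * τ * 0) * 0)) := by
          apply Tendsto.sub
          · exact ((hu_lim.const_mul α).neg)
          · exact (((Real.continuous_exp.tendsto _).comp
              (hu_lim.const_mul (α*τ))).const_mul γ).mul hu_lim
        simp only [mul_zero, neg_zero, sub_zero, Real.exp_zero] at h1 ⊢
        simpa [Function.comp_def] using (Real.continuous_exp.tendsto _).comp h1)
    rw [hun] at this
    simpa using this
  have hae : ∀ᵐ ω ∂μ, 0 < X ω ∧ 0 < Y ω := by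
    have hm : MeasurableSet {ω | 0 < X ω ∧ 0 < Y ω} :=
      (hX measurableSet_Ioi).inter (hY measurableSet_Ioi)
    rw [ae_iff]
    have h0 : {ω | ¬(0 < X ω ∧ 0 < Y ω)} = {ω | 0 < X ω ∧ 0 < Y ω}ᶜ := rfl
    rw [h0, measure_compl hm (measure_ne_top μ _), hS, measure_univ, tsub_self]
  constructor
  · intro x hx
    have hcong : μ {ω | x < X ω} = μ {ω | x < X ω ∧ 0 < Y ω} := by
      apply measure_congr
      rw [Filter.eventuallyEq_set]
      filter_upwards [hae] with ω hω
      exact ⟨fun h => ⟨h, hω.2⟩, fun h => h.1⟩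
    have hun : (⋃ n, {ω | x < X ω ∧ u n < Y ω}) = {ω | x < X ω ∧ 0 < Y ω} := by
      ext ω
      simp only [mem_iUnion, mem_setOf_eq]
      constructor
      · rintro ⟨n, h1, h2⟩; exact ⟨h1, (afc_u_pos n).trans h2⟩
      · rintro ⟨h1, h2⟩
        obtain ⟨n, hn⟩ := exists_nat_one_div_lt h2
        exact ⟨n, h1, hn⟩
    have key := afc_survival_limit μ (fun n => {ω | x < X ω ∧ u n < Y ω})
      (fun m n h ω => fun ⟨h1, h2⟩ => ⟨h1, lt_of_le_of_lt (afc_u_anti h) h2⟩)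
      (fun n => Real.exp (-(α * x) - γ * Real.exp (α * τ * x) * u n))
      (Real.exp (-(α * x)))
      (fun n => hjoint x hx (u n) (afc_u_pos n))
      (by
        have h1 : Tendsto (fun n => -(α * x) - γ * Real.exp (α * τ * x) * u n) atTop
            (nhds (-(α * x))) := by
          have := tendsto_const_nhds (x := -(α * x)) (f := atTop (α := ℕ)) |>.sub
            (hu_lim.const_mul (γ * Real.exp (α * τ * x)))
          simpa only [mul_zero, sub_zero] using this
        exact (Real.continuous_exp.tendsto _).comp h1)
    rw [hun] at key
    rw [hcong, key]
  · intro y hy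
    have hcong : μ {ω | y < Y ω} = μ {ω | 0 < X ω ∧ y < Y ω} := by
      apply measure_congr
      rw [Filter.eventuallyEq_set]
      filter_upwards [hae] with ω hω
      exact ⟨fun h => ⟨hω.1, h⟩, fun h => h.2⟩
    have hun : (⋃ n, {ω | u n < X ω ∧ y < Y ω}) = {ω | 0 < X ω ∧ y < Y ω} := by
      ext ω
      simp only [mem_iUnion, mem_setOf_eq]
      constructor
      · rintro ⟨n, h1, h2⟩; exact ⟨(afc_u_pos n).trans h1, h2⟩
      · rintro ⟨h1, h2⟩
        obtain ⟨n, hn⟩ := exists_nat_one_div_lt h1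
        exact ⟨n, hn, h2⟩
    have key := afc_survival_limit μ (fun n => {ω | u n < X ω ∧ y < Y ω})
      (fun m n h ω => fun ⟨h1, h2⟩ => ⟨lt_of_le_of_lt (afc_u_anti h) h1, h2⟩)
      (fun n => Real.exp (-(α * u n) - γ * Real.exp (α * τ * u n) * y))
      (Real.exp (-(γ * y)))
      (fun n => hjoint (u n) (afc_u_pos n) y hy)
      (by
        have h1 : Tendsto (fun n => -(α * u n) - γ * Real.exp (α * τ * u n) * y) atTop
            (nhds (-(α * 0) - γ * Real.exp (α * τ * 0) * y)) := by
          apply Tendsto.sub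
          · exact (hu_lim.const_mul α).neg
          · exact (((Real.continuous_exp.tendsto _).comp
              (hu_lim.const_mul (α*τ))).const_mul γ).mul_const y
        simp only [mul_zero, neg_zero, zero_sub, Real.exp_zero, mul_one] at h1
        exact (Real.continuous_exp.tendsto _).comp h1)
    rw [hun] at key
    rw [hcong, key]

lemma afc_exy
    {Ω : Type*} [MeasurableSpace Ω] (μ : Measure Ω) [IsProbabilityMeasure μ]
    (X Y : Ω → ℝ) (hX : Measurable X) (hY : Measurable Y)
    (hXnn : ∀ ω, 0 ≤ X ω) (hYnn : ∀ ω, 0 ≤ Y ω)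
    (hXYint : Integrable (fun ω => X ω * Y ω) μ)
    (α γ τ : ℝ) (hα : 0 < α) (hγ : 0 < γ) (hτ0 : 0 ≤ τ)
    (hjoint : ∀ x > (0:ℝ), ∀ y > (0:ℝ),
      (μ {ω | x < X ω ∧ y < Y ω}).toReal
        = Real.exp (-(α * x) - γ * Real.exp (α * τ * x) * y)) :
    ∫ ω, X ω * Y ω ∂μ = 1/(α*γ*(1+τ)) := by
  have h1τ : (0:ℝ) < 1 + τ := by linarith
  set S : Set (Ω × (ℝ × ℝ)) := {q | q.2.1 < X q.1 ∧ q.2.2 < Y q.1} with hS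
  have hSm : MeasurableSet S := by
    apply MeasurableSet.inter
    · exact measurableSet_lt (measurable_fst.comp measurable_snd) (hX.comp measurable_fst)
    · exact measurableSet_lt (measurable_snd.comp measurable_snd) (hY.comp measurable_fst)
  have hGm : Measurable (S.indicator (1 : Ω × (ℝ × ℝ) → ENNReal)) :=
    measurable_one.indicator hSm
  have hL : ∫⁻ ω, ENNReal.ofReal (X ω * Y ω) ∂μ
      = ENNReal.ofReal (1/γ * (1/(α*(1+τ)))) := by
    calc ∫⁻ ω, ENNReal.ofReal (X ω * Y ω) ∂μ
        = ∫⁻ ω, ∫⁻ p, S.indicator 1 (ω, p)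
            ∂((volume.restrict (Ioi (0:ℝ))).prod (volume.restrict (Ioi (0:ℝ)))) ∂μ := by
          refine lintegral_congr fun ω => ?_
          have hset : {p : ℝ × ℝ | p.1 < X ω ∧ p.2 < Y ω} = Iio (X ω) ×ˢ Iio (Y ω) := by
            ext p; simp [Set.mem_prod]
          have heq : (fun p : ℝ × ℝ => S.indicator 1 (ω, p))
              = (Iio (X ω) ×ˢ Iio (Y ω)).indicator (1 : ℝ × ℝ → ENNReal) := by
            rw [← hset]; rfl
          rw [heq, lintegral_indicator_one (measurableSet_Iio.prod measurableSet_Iio),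
            Measure.prod_prod, Measure.restrict_apply measurableSet_Iio,
            Measure.restrict_apply measurableSet_Iio,
            Set.Iio_inter_Ioi, Set.Iio_inter_Ioi, Real.volume_Ioo, Real.volume_Ioo,
            sub_zero, sub_zero, ← ENNReal.ofReal_mul (hXnn ω)]
      _ = ∫⁻ p, ∫⁻ ω, S.indicator 1 (ω, p) ∂μ
            ∂((volume.restrict (Ioi (0:ℝ))).prod (volume.restrict (Ioi (0:ℝ)))) :=
          lintegral_lintegral_swap hGm.aemeasurable
      _ = ∫⁻ p, μ {ω | p.1 < X ω ∧ p.2 < Y ω}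
            ∂((volume.restrict (Ioi (0:ℝ))).prod (volume.restrict (Ioi (0:ℝ)))) := by
          refine lintegral_congr fun p => ?_
          have heq : (fun ω => S.indicator 1 (ω, p))
              = ({ω | p.1 < X ω ∧ p.2 < Y ω}).indicator (1 : Ω → ENNReal) := rfl
          have hm2 : MeasurableSet {ω | p.1 < X ω ∧ p.2 < Y ω} :=
            (hX measurableSet_Ioi).inter (hY measurableSet_Ioi)
          rw [heq, lintegral_indicator_one hm2]
      _ = ∫⁻ x in Ioi (0:ℝ), ∫⁻ y in Ioi (0:ℝ), μ {ω | x < X ω ∧ y < Y ω} := by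
          rw [lintegral_prod]
          exact (measurable_measure_prodMk_right hSm).aemeasurable
      _ = ∫⁻ x in Ioi (0:ℝ), ENNReal.ofReal
            (Real.exp (-(α*x)) * (1/(γ * Real.exp (α*τ*x)))) := by
          refine setLIntegral_congr_fun measurableSet_Ioi (fun x hx => ?_)
          have hr : 0 < γ * Real.exp (α*τ*x) := by positivity
          have hinner : ∫⁻ y in Ioi (0:ℝ), μ {ω | x < X ω ∧ y < Y ω}
              = ∫⁻ y in Ioi (0:ℝ), ENNReal.ofReal
                  (Real.exp (-(α*x)) * Real.exp (-((γ * Real.exp (α*τ*x)) * y))) := by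
            refine setLIntegral_congr_fun measurableSet_Ioi (fun y hy => ?_)
            rw [← ENNReal.ofReal_toReal (measure_ne_top μ _), hjoint x hx y hy,
              ← Real.exp_add]
            ring_nf
          rw [hinner, ← ofReal_integral_eq_lintegral_ofReal
            ((afc_aux_intOn _ hr).const_mul _)
            (ae_of_all _ fun y => by positivity),
            integral_const_mul, afc_aux_exp _ hr]
      _ = ENNReal.ofReal (1/γ * (1/(α*(1+τ)))) := by
          have hcg : ∀ x : ℝ, Real.exp (-(α*x)) * (1/(γ * Real.exp (α*τ*x)))
              = 1/γ * Real.exp (-((α*(1+τ))*x)) := by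
            intro x
            have h2 : Real.exp (-(α * x)) * Real.exp (-(α * τ * x))
                = Real.exp (-((α*(1+τ))*x)) := by
              rw [← Real.exp_add]; ring_nf
            calc Real.exp (-(α*x)) * (1/(γ * Real.exp (α*τ*x)))
                = 1/γ * (Real.exp (-(α*x)) * (Real.exp (α*τ*x))⁻¹) := by
                  rw [one_div, mul_inv, one_div]; ring
              _ = 1/γ * (Real.exp (-(α*x)) * Real.exp (-(α*τ*x))) := by
                  rw [← Real.exp_neg]
              _ = 1/γ * Real.exp (-((α*(1+τ))*x)) := by rw [h2]
          simp only [hcg]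
          rw [← ofReal_integral_eq_lintegral_ofReal
            ((afc_aux_intOn _ (by positivity : (0:ℝ) < α*(1+τ))).const_mul _)
            (ae_of_all _ fun x => by positivity),
            integral_const_mul, afc_aux_exp _ (by positivity)]
  have hnn : 0 ≤ᵐ[μ] fun ω => X ω * Y ω :=
    ae_of_all _ fun ω => mul_nonneg (hXnn ω) (hYnn ω)
  rw [integral_eq_lintegral_of_nonneg_ae hnn hXYint.aestronglyMeasurable, hL,
    ENNReal.toReal_ofReal (by positivity)]
  field_simp

lemma afc_moments_one
    {Ω : Type*} [MeasurableSpace Ω] (μ : Measure Ω) [IsProbabilityMeasure μ]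
    (X : Ω → ℝ) (hXnn : ∀ ω, 0 ≤ X ω) (hX2 : MemLp X 2 μ)
    (α : ℝ) (hα : 0 < α)
    (hmarg : ∀ x > (0:ℝ), (μ {ω | x < X ω}).toReal = Real.exp (-(α * x))) :
    ∫ ω, X ω ∂μ = 1/α ∧ ∫ ω, X ω^2 ∂μ = 2/α^2 ∧ variance X μ = 1/α^2 := by
  have hXint : Integrable X μ := hX2.integrable one_le_two
  have hEX : ∫ ω, X ω ∂μ = 1/α := by
    rw [hXint.integral_eq_integral_meas_lt (ae_of_all _ hXnn), ← afc_aux_exp α hα]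
    exact setIntegral_congr_fun measurableSet_Ioi fun t ht => hmarg t ht
  have hEX2 : ∫ ω, X ω^2 ∂μ = 2/α^2 := by
    have hint2 : Integrable (fun ω => X ω^2) μ := hX2.integrable_sq
    rw [hint2.integral_eq_integral_meas_lt (ae_of_all _ fun ω => sq_nonneg _),
      ← afc_aux_sqrtexp α hα]
    refine setIntegral_congr_fun measurableSet_Ioi fun t ht => ?_
    have hset : {a | t < X a^2} = {ω | Real.sqrt t < X ω} := by
      ext ω; simp only [mem_setOf_eq]
      constructor
      · intro h
        have ht' : (0:ℝ) < t := ht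
        have hx : 0 < X ω := by nlinarith [hXnn ω]
        exact (Real.sqrt_lt' hx).2 h
      · intro h
        have hx : 0 < X ω := lt_of_le_of_lt (Real.sqrt_nonneg t) h
        exact (Real.sqrt_lt' hx).1 h
    rw [hset]; exact hmarg _ (Real.sqrt_pos.2 ht)
  refine ⟨hEX, hEX2, ?_⟩
  rw [variance_eq_sub hX2]
  have h1 : μ[X^2] = ∫ ω, X ω^2 ∂μ := rfl
  rw [h1, hEX2, hEX]
  field_simp
  ring

theorem exponential_afc_moments
    {Ω : Type*} [MeasurableSpace Ω] (μ : Measure Ω) [IsProbabilityMeasure μ]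
    (X Y : Ω → ℝ) (hX : Measurable X) (hY : Measurable Y)
    (hXnn : ∀ ω, 0 ≤ X ω) (hYnn : ∀ ω, 0 ≤ Y ω)
    (hX2 : MemLp X 2 μ) (hY2 : MemLp Y 2 μ)
    (hXYint : Integrable (fun ω => X ω * Y ω) μ)
    (α γ τ : ℝ) (hα : 0 < α) (hγ : 0 < γ) (hτ0 : 0 ≤ τ) (hτ1 : τ ≤ 1)
    (hjoint : ∀ x > (0:ℝ), ∀ y > (0:ℝ),
      (μ {ω | x < X ω ∧ y < Y ω}).toReal
        = Real.exp (-(α * x) - γ * Real.exp (α * τ * x) * y)) :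
    (∀ x > (0:ℝ), (μ {ω | x < X ω}).toReal = Real.exp (-(α * x))) ∧
    (∀ y > (0:ℝ), (μ {ω | y < Y ω}).toReal = Real.exp (-(γ * y))) ∧
    (∫ ω, X ω * Y ω ∂μ - (∫ ω, X ω ∂μ) * ∫ ω, Y ω ∂μ
        = -τ / (α * γ * (1 + τ))) ∧
    variance X μ = 1 / α ^ 2 ∧
    variance Y μ = 1 / γ ^ 2 ∧
    (∫ ω, X ω * Y ω ∂μ - (∫ ω, X ω ∂μ) * ∫ ω, Y ω ∂μ) /
        Real.sqrt (variance X μ * variance Y μ) = -τ / (1 + τ) ∧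
    -τ / (1 + τ) ∈ Icc (-(1/2) : ℝ) 0 := by
  have h1τ : (0:ℝ) < 1 + τ := by linarith
  obtain ⟨hmX, hmY⟩ := afc_marginals μ X Y hX hY α γ τ hjoint
  have hmX' : ∀ x > (0:ℝ), (μ {ω | x < X ω}).toReal = Real.exp (-(α * x)) :=
    fun x hx => by rw [hmX x hx, ENNReal.toReal_ofReal (Real.exp_nonneg _)]
  have hmY' : ∀ y > (0:ℝ), (μ {ω | y < Y ω}).toReal = Real.exp (-(γ * y)) :=
    fun y hy => by rw [hmY y hy, ENNReal.toReal_ofReal (Real.exp_nonneg _)]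
  obtain ⟨hEX, _, hvX⟩ := afc_moments_one μ X hXnn hX2 α hα hmX'
  obtain ⟨hEY, _, hvY⟩ := afc_moments_one μ Y hYnn hY2 γ hγ hmY'
  have hEXY := afc_exy μ X Y hX hY hXnn hYnn hXYint α γ τ hα hγ hτ0 hjoint
  have hcov : ∫ ω, X ω * Y ω ∂μ - (∫ ω, X ω ∂μ) * ∫ ω, Y ω ∂μ
      = -τ / (α * γ * (1 + τ)) := by
    rw [hEXY, hEX, hEY]
    field_simp
    ring
  have hsqrt : Real.sqrt (variance X μ * variance Y μ) = 1/(α*γ) := by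
    rw [hvX, hvY, show 1/α^2 * (1/γ^2) = (1/(α*γ))^2 by ring]
    exact Real.sqrt_sq (by positivity)
  refine ⟨hmX', hmY', hcov, hvX, hvY, ?_, ?_⟩
  · rw [hcov, hsqrt]
    field_simp
  · constructor
    · rw [neg_le, neg_div, neg_neg, div_le_iff₀ h1τ]
      linarith
    · apply div_nonpos_of_nonpos_of_nonneg <;> linarith
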